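/- In the regularized team model with finite observation and action spaces, for any two policy profiles γ, ξ ∈ ∏Γ_i and each agent j, the best response maps satisfy ‖B_j(γ^{-j}) − B_j(ξ^{-j})‖_{L¹} ≤ (1/ρ_j) ∑_{i≠j} (λ_i(r)/2) ‖γ_i − ξ_i‖_{L¹}. -/

import Mathlib

open Finset

private lemma limit_lemma {A B c : ℝ} (hc : 0 ≤ c)
    (h : ∀ t : ℝ, 0 < t → t ≤ 1 → A ≤ B + c * t) : A ≤ B := by
  by_contra hAB
  push_neg at hAB
  have hε0 : 0 < (A - B) / 2 := by linarith
  have hc1 : (0:ℝ) < c + 1 := by linarith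
  have ht0 : 0 < min 1 ((A - B) / 2 / (c + 1)) := lt_min one_pos (div_pos hε0 hc1)
  have h1 := h _ ht0 (min_le_left _ _)
  have hct : c * min 1 ((A - B) / 2 / (c + 1)) ≤ (A - B) / 2 := by
    calc c * min 1 ((A - B) / 2 / (c + 1)) ≤ c * ((A - B) / 2 / (c + 1)) :=
          mul_le_mul_of_nonneg_left (min_le_right _ _) hc
      _ ≤ (c + 1) * ((A - B) / 2 / (c + 1)) :=
          mul_le_mul_of_nonneg_right (by linarith) (div_pos hε0 hc1).le
      _ = (A - B) / 2 := by field_simp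
  linarith

private lemma master_sum {ι : Type*} [Fintype ι] [DecidableEq ι]
    {Y U : ι → Type*} [∀ i, Fintype (Y i)] [∀ i, Fintype (U i)]
    (w : ∀ i, Y i → U i → ℝ) :
    ∑ y : ∀ i, Y i, ∑ u : ∀ i, U i, ∏ i, w i (y i) (u i)
      = ∏ i, ∑ yi, ∑ ui, w i yi ui := by
  rw [Fintype.prod_sum fun i yi => ∑ ui, w i yi ui]
  exact Finset.sum_congr rfl fun y _ => (Fintype.prod_sum fun i ui => w i (y i) ui).symm

private lemma zero_sum {ι : Type*} [Fintype ι] [DecidableEq ι]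
    {U : ι → Type*} [∀ i, Fintype (U i)] [∀ i, Nonempty (U i)]
    (a : ι) (F : (∀ i, U i) → ℝ) (G : U a → ℝ)
    (hF : ∀ u v, F (Function.update u a v) = F u) (hG : ∑ v, G v = 0) :
    ∑ u : ∀ i, U i, F u * G (u a) = 0 := by
  classical
  obtain ⟨v₀⟩ : Nonempty (U a) := inferInstance
  set e := Equiv.piSplitAt a U with he
  have hupd : ∀ (v : U a) (w : ∀ i : {i // i ≠ a}, U i),
      e.symm (v, w) = Function.update (e.symm (v₀, w)) a v := by
    intro v w
    funext x
    by_cases hx : x = a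
    · subst hx; simp [he, Equiv.piSplitAt_symm_apply]
    · simp [he, Equiv.piSplitAt_symm_apply, hx, Function.update_of_ne hx]
  have key : ∀ u : ∀ i, U i, F u * G (u a)
      = (fun p : U a × (∀ i : {i // i ≠ a}, U i) => F (e.symm (v₀, p.2)) * G p.1) (e u) := by
    intro u
    have h1 : Function.update (e.symm (v₀, (e u).2)) a (u a) = u := by
      rw [← hupd (u a) (e u).2]
      have h2 : ((u a, (e u).2) : U a × (∀ i : {i // i ≠ a}, U i)) = e u := by
        have : (e u).1 = u a := rfl
        rw [← this]
      rw [h2, e.symm_apply_apply]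
    have h3 : F u = F (e.symm (v₀, (e u).2)) := by
      conv_lhs => rw [← h1]
      rw [hF]
    have h4 : (e u).1 = u a := rfl
    simp only [h3, h4]
  calc ∑ u : ∀ i, U i, F u * G (u a)
      = ∑ p : U a × (∀ i : {i // i ≠ a}, U i), F (e.symm (v₀, p.2)) * G p.1 :=
        Fintype.sum_equiv e _ _ key
    _ = 0 := by
        rw [Fintype.sum_prod_type]
        simp only [← Finset.sum_mul]
        rw [← Finset.mul_sum, hG, mul_zero]

private lemma argmax_half {V : Type*} [Fintype V]
    (Om : (V → ℝ) → ℝ) (ρ : ℝ) (hρ : 0 < ρ)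
    (hOm : ∀ δ ξ : V → ℝ,
      ((∀ v, 0 ≤ δ v) ∧ ∑ v, δ v = 1) → ((∀ v, 0 ≤ ξ v) ∧ ∑ v, ξ v = 1) →
      ∀ t : ℝ, 0 ≤ t → t ≤ 1 →
        Om (fun v => t * δ v + (1 - t) * ξ v) ≤
          t * Om δ + (1 - t) * Om ξ - ρ * (t * (1 - t) / 2) * (∑ v, |δ v - ξ v|) ^ 2)
    (g δ δ' : V → ℝ)
    (hδ : (∀ v, 0 ≤ δ v) ∧ ∑ v, δ v = 1) (hδ' : (∀ v, 0 ≤ δ' v) ∧ ∑ v, δ' v = 1)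
    (hmax : ∀ β : V → ℝ, (∀ v, 0 ≤ β v) → ∑ v, β v = 1 →
      ∑ v, g v * β v - Om β ≤ ∑ v, g v * δ v - Om δ) :
    (∑ v, g v * δ' v - Om δ') + ρ / 2 * (∑ v, |δ v - δ' v|) ^ 2
      ≤ ∑ v, g v * δ v - Om δ := by
  set s := ∑ v, |δ v - δ' v| with hs
  apply limit_lemma (c := ρ / 2 * s ^ 2) (by positivity)
  intro t ht0 ht1
  have hpos : ∀ v, 0 ≤ t * δ' v + (1 - t) * δ v := by
    intro v; have := hδ'.1 v; have := hδ.1 v; nlinarith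
  have hsum : ∑ v, (t * δ' v + (1 - t) * δ v) = 1 := by
    rw [Finset.sum_add_distrib, ← Finset.mul_sum, ← Finset.mul_sum, hδ.2, hδ'.2]; ring
  have hconv := hOm δ' δ hδ' hδ t ht0.le ht1
  have hopt := hmax _ hpos hsum
  have hlin : ∑ v, g v * (t * δ' v + (1 - t) * δ v)
      = t * ∑ v, g v * δ' v + (1 - t) * ∑ v, g v * δ v := by
    rw [Finset.mul_sum, Finset.mul_sum, ← Finset.sum_add_distrib]
    exact Finset.sum_congr rfl fun v _ => by ring
  rw [hlin] at hopt
  have hss : ∑ v, |δ' v - δ v| = s := by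
    rw [hs]; exact Finset.sum_congr rfl fun v _ => abs_sub_comm _ _
  rw [hss] at hconv
  have key : t * ((∑ v, g v * δ' v - Om δ') + ρ / 2 * s ^ 2)
      ≤ t * ((∑ v, g v * δ v - Om δ) + ρ / 2 * s ^ 2 * t) := by nlinarith [hopt, hconv]
  exact le_of_mul_le_mul_left key ht0

private lemma argmax_gap {V : Type*} [Fintype V]
    (Om : (V → ℝ) → ℝ) (ρ : ℝ) (hρ : 0 < ρ)
    (hOm : ∀ δ ξ : V → ℝ,
      ((∀ v, 0 ≤ δ v) ∧ ∑ v, δ v = 1) → ((∀ v, 0 ≤ ξ v) ∧ ∑ v, ξ v = 1) →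
      ∀ t : ℝ, 0 ≤ t → t ≤ 1 →
        Om (fun v => t * δ v + (1 - t) * ξ v) ≤
          t * Om δ + (1 - t) * Om ξ - ρ * (t * (1 - t) / 2) * (∑ v, |δ v - ξ v|) ^ 2)
    (g g' δ δ' : V → ℝ)
    (hδ : (∀ v, 0 ≤ δ v) ∧ ∑ v, δ v = 1) (hδ' : (∀ v, 0 ≤ δ' v) ∧ ∑ v, δ' v = 1)
    (hmax : ∀ β : V → ℝ, (∀ v, 0 ≤ β v) → ∑ v, β v = 1 →
      ∑ v, g v * β v - Om β ≤ ∑ v, g v * δ v - Om δ)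
    (hmax' : ∀ β : V → ℝ, (∀ v, 0 ≤ β v) → ∑ v, β v = 1 →
      ∑ v, g' v * β v - Om β ≤ ∑ v, g' v * δ' v - Om δ') :
    ρ * (∑ v, |δ v - δ' v|) ^ 2 ≤ ∑ v, (g v - g' v) * (δ v - δ' v) := by
  have h1 := argmax_half Om ρ hρ hOm g δ δ' hδ hδ' hmax
  have h2 := argmax_half Om ρ hρ hOm g' δ' δ hδ' hδ hmax'
  have hss : ∑ v, |δ' v - δ v| = ∑ v, |δ v - δ' v| :=
    Finset.sum_congr rfl fun v _ => abs_sub_comm _ _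
  rw [hss] at h2
  have expand : ∑ v, (g v - g' v) * (δ v - δ' v)
      = ((∑ v, g v * δ v) - (∑ v, g v * δ' v)) - ((∑ v, g' v * δ v) - (∑ v, g' v * δ' v)) := by
    simp only [← Finset.sum_sub_distrib]
    exact Finset.sum_congr rfl fun v _ => by ring
  rw [expand]
  linarith

private lemma coord_bound {ι : Type*} [Fintype ι] [DecidableEq ι]
    {Y U : ι → Type*} [∀ i, Fintype (Y i)] [∀ i, Nonempty (Y i)]
    [∀ i, Fintype (U i)] [∀ i, Nonempty (U i)]
    [∀ i, DecidableEq (Y i)] [∀ i, DecidableEq (U i)]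
    (r : (∀ i, Y i) → (∀ i, U i) → ℝ)
    (j a : ι) (haj : a ≠ j) (yj : Y j) (uj : U j)
    (c : ∀ i, Y i → U i → ℝ)
    (hc : ∀ i yi, (∀ v, 0 ≤ c i yi v) ∧ ∑ v, c i yi v = 1)
    (d : Y a → U a → ℝ) (hd : ∀ ya, ∑ v, d ya v = 0)
    (lamA : ℝ)
    (hlamA : ∀ (y : ∀ i, Y i) (u : ∀ i, U i),
      Finset.univ.sup' Finset.univ_nonempty (fun v : U a => r y (Function.update u a v))
        - Finset.univ.inf' Finset.univ_nonempty (fun v : U a => r y (Function.update u a v))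
        ≤ lamA) :
    |∑ y : ∀ i, Y i, ∑ u : ∀ i, U i,
        (if y j = yj ∧ u j = uj then
          r y u * ((d (y a) (u a) * (Fintype.card (Y a) : ℝ)⁻¹)
            * ∏ i ∈ (Finset.univ.erase j).erase a, (c i (y i) (u i) * (Fintype.card (Y i) : ℝ)⁻¹))
        else 0)|
      ≤ lamA / 2 * ∑ ya : Y a, (Fintype.card (Y a) : ℝ)⁻¹ * ∑ v, |d ya v| := by
  classical
  set C : (∀ i, Y i) → (∀ i, U i) → ℝ := fun y u =>
    (Finset.univ.sup' Finset.univ_nonempty (fun v : U a => r y (Function.update u a v))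
      + Finset.univ.inf' Finset.univ_nonempty (fun v : U a => r y (Function.update u a v))) / 2
    with hC
  -- invariance of C under updating coordinate a
  have hCinv : ∀ y u v, C y (Function.update u a v) = C y u := by
    intro y u v
    have hfun : (fun v' : U a => r y (Function.update (Function.update u a v) a v'))
        = fun v' : U a => r y (Function.update u a v') := by
      funext v'; rw [Function.update_idem]
    simp only [hC, hfun]
  -- |r - C| ≤ lamA / 2
  have habs : ∀ y u, |r y u - C y u| ≤ lamA / 2 := by
    intro y u
    have h1 : Finset.univ.inf' Finset.univ_nonempty
        (fun v : U a => r y (Function.update u a v)) ≤ r y u := by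
      have := Finset.inf'_le (f := fun v : U a => r y (Function.update u a v))
        (Finset.mem_univ (u a))
      rwa [Function.update_eq_self] at this
    have h2 : r y u ≤ Finset.univ.sup' Finset.univ_nonempty
        (fun v : U a => r y (Function.update u a v)) := by
      have := Finset.le_sup' (f := fun v : U a => r y (Function.update u a v))
        (Finset.mem_univ (u a))
      rwa [Function.update_eq_self] at this
    have h3 := hlamA y u
    rw [abs_le]; constructor <;> simp only [hC] <;> linarith
  -- nonnegativity of products
  have hP : ∀ (y : ∀ i, Y i) (u : ∀ i, U i),
      0 ≤ ∏ i ∈ (Finset.univ.erase j).erase a, (c i (y i) (u i) * (Fintype.card (Y i) : ℝ)⁻¹) :=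
    fun y u => Finset.prod_nonneg fun i _ =>
      mul_nonneg ((hc i (y i)).1 (u i)) (by positivity)
  -- Step 1 : replace r by r - C
  have hsplit : ∀ (y : ∀ i, Y i) (u : ∀ i, U i),
      (if y j = yj ∧ u j = uj then
          r y u * ((d (y a) (u a) * (Fintype.card (Y a) : ℝ)⁻¹)
            * ∏ i ∈ (Finset.univ.erase j).erase a, (c i (y i) (u i) * (Fintype.card (Y i) : ℝ)⁻¹))
        else 0)
      = (if y j = yj ∧ u j = uj then
          (r y u - C y u) * ((d (y a) (u a) * (Fintype.card (Y a) : ℝ)⁻¹)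
            * ∏ i ∈ (Finset.univ.erase j).erase a, (c i (y i) (u i) * (Fintype.card (Y i) : ℝ)⁻¹))
        else 0)
      + ((if y j = yj ∧ u j = uj then (1:ℝ) else 0) * C y u
          * ∏ i ∈ (Finset.univ.erase j).erase a, (c i (y i) (u i) * (Fintype.card (Y i) : ℝ)⁻¹))
        * (d (y a) (u a) * (Fintype.card (Y a) : ℝ)⁻¹) := by
    intro y u; split_ifs with h <;> ring
  have hzero : ∀ y : ∀ i, Y i,
      ∑ u : ∀ i, U i, ((if y j = yj ∧ u j = uj then (1:ℝ) else 0) * C y u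
          * ∏ i ∈ (Finset.univ.erase j).erase a, (c i (y i) (u i) * (Fintype.card (Y i) : ℝ)⁻¹))
        * (d (y a) (u a) * (Fintype.card (Y a) : ℝ)⁻¹) = 0 := by
    intro y
    apply zero_sum a
      (F := fun u => (if y j = yj ∧ u j = uj then (1:ℝ) else 0) * C y u
          * ∏ i ∈ (Finset.univ.erase j).erase a, (c i (y i) (u i) * (Fintype.card (Y i) : ℝ)⁻¹))
      (G := fun v => d (y a) v * (Fintype.card (Y a) : ℝ)⁻¹)
    · intro u v
      have h1 : Function.update u a v j = u j := Function.update_of_ne (Ne.symm haj) _ _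
      have h2 : ∀ i ∈ (Finset.univ.erase j).erase a,
          c i (y i) (Function.update u a v i) * (Fintype.card (Y i) : ℝ)⁻¹
            = c i (y i) (u i) * (Fintype.card (Y i) : ℝ)⁻¹ := by
        intro i hi
        rw [Function.update_of_ne (Finset.mem_erase.1 hi).1]
      rw [h1, hCinv, Finset.prod_congr rfl h2]
    · rw [← Finset.sum_mul, hd, zero_mul]
  have hdecomp : ∑ y : ∀ i, Y i, ∑ u : ∀ i, U i,
      (if y j = yj ∧ u j = uj then
          r y u * ((d (y a) (u a) * (Fintype.card (Y a) : ℝ)⁻¹)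
            * ∏ i ∈ (Finset.univ.erase j).erase a, (c i (y i) (u i) * (Fintype.card (Y i) : ℝ)⁻¹))
        else 0)
      = ∑ y : ∀ i, Y i, ∑ u : ∀ i, U i,
      (if y j = yj ∧ u j = uj then
          (r y u - C y u) * ((d (y a) (u a) * (Fintype.card (Y a) : ℝ)⁻¹)
            * ∏ i ∈ (Finset.univ.erase j).erase a, (c i (y i) (u i) * (Fintype.card (Y i) : ℝ)⁻¹))
        else 0) := by
    simp only [hsplit, Finset.sum_add_distrib, hzero, add_zero]
  rw [hdecomp]
  -- weight family
  set w : ∀ i, Y i → U i → ℝ :=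
    Function.update (Function.update
        (fun i (yi : Y i) (ui : U i) => c i yi ui * (Fintype.card (Y i) : ℝ)⁻¹) a
        (fun ya ua => |d ya ua| * (Fintype.card (Y a) : ℝ)⁻¹)) j
      (fun yi ui => (if yi = yj then (1:ℝ) else 0) * (if ui = uj then 1 else 0)) with hw
  have hwj : w j = fun yi ui => (if yi = yj then (1:ℝ) else 0) * (if ui = uj then 1 else 0) := by
    rw [hw, Function.update_self]
  have hwa : w a = fun ya ua => |d ya ua| * (Fintype.card (Y a) : ℝ)⁻¹ := by
    rw [hw, Function.update_of_ne haj, Function.update_self]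
  have hwi : ∀ i, i ≠ a → i ≠ j →
      w i = fun yi ui => c i yi ui * (Fintype.card (Y i) : ℝ)⁻¹ := by
    intro i hia hij
    rw [hw, Function.update_of_ne hij, Function.update_of_ne hia]
  have hprodw : ∀ (y : ∀ i, Y i) (u : ∀ i, U i),
      ∏ i, w i (y i) (u i)
        = ((if y j = yj then (1:ℝ) else 0) * (if u j = uj then 1 else 0))
          * ((|d (y a) (u a)| * (Fintype.card (Y a) : ℝ)⁻¹)
            * ∏ i ∈ (Finset.univ.erase j).erase a,
                (c i (y i) (u i) * (Fintype.card (Y i) : ℝ)⁻¹)) := by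
    intro y u
    rw [← Finset.mul_prod_erase Finset.univ (fun i => w i (y i) (u i)) (Finset.mem_univ j)]
    rw [← Finset.mul_prod_erase (Finset.univ.erase j) (fun i => w i (y i) (u i))
        (Finset.mem_erase.2 ⟨haj, Finset.mem_univ a⟩)]
    simp only [hwj, hwa]
    congr 2
    apply Finset.prod_congr rfl
    intro i hi
    obtain ⟨hia, hij⟩ := Finset.mem_erase.1 hi
    simp only [hwi i hia (Finset.mem_erase.1 hij).1]
  have hterm : ∀ (y : ∀ i, Y i) (u : ∀ i, U i),
      |if y j = yj ∧ u j = uj then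
          (r y u - C y u) * ((d (y a) (u a) * (Fintype.card (Y a) : ℝ)⁻¹)
            * ∏ i ∈ (Finset.univ.erase j).erase a, (c i (y i) (u i) * (Fintype.card (Y i) : ℝ)⁻¹))
        else 0|
      ≤ lamA / 2 * ∏ i, w i (y i) (u i) := by
    intro y u
    rw [hprodw y u]
    by_cases h : y j = yj ∧ u j = uj
    · rw [if_pos h, if_pos h.1, if_pos h.2]
      have hPnn := hP y u
      calc |(r y u - C y u) * ((d (y a) (u a) * (Fintype.card (Y a) : ℝ)⁻¹)
              * ∏ i ∈ (Finset.univ.erase j).erase a,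
                  (c i (y i) (u i) * (Fintype.card (Y i) : ℝ)⁻¹))|
          = |r y u - C y u| * |(d (y a) (u a) * (Fintype.card (Y a) : ℝ)⁻¹)
              * ∏ i ∈ (Finset.univ.erase j).erase a,
                  (c i (y i) (u i) * (Fintype.card (Y i) : ℝ)⁻¹)| := abs_mul _ _
        _ ≤ lamA / 2 * |(d (y a) (u a) * (Fintype.card (Y a) : ℝ)⁻¹)
              * ∏ i ∈ (Finset.univ.erase j).erase a,
                  (c i (y i) (u i) * (Fintype.card (Y i) : ℝ)⁻¹)| :=
            mul_le_mul_of_nonneg_right (habs y u) (abs_nonneg _)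
        _ = lamA / 2 * ((1:ℝ) * 1
            * ((|d (y a) (u a)| * (Fintype.card (Y a) : ℝ)⁻¹)
              * ∏ i ∈ (Finset.univ.erase j).erase a,
                  (c i (y i) (u i) * (Fintype.card (Y i) : ℝ)⁻¹))) := by
            rw [abs_mul, abs_mul,
              abs_of_nonneg (show (0:ℝ) ≤ (Fintype.card (Y a) : ℝ)⁻¹ by positivity),
              abs_of_nonneg hPnn]
            ring
    · rw [if_neg h]
      have hind : (if y j = yj then (1:ℝ) else 0) * (if u j = uj then 1 else 0) = 0 := by
        rcases not_and_or.1 h with h1 | h1 <;> simp [h1]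
      rw [hind, zero_mul, mul_zero, abs_zero]
  have hcols : ∏ i, ∑ yi, ∑ ui, w i yi ui
      = ∑ ya : Y a, (Fintype.card (Y a) : ℝ)⁻¹ * ∑ v, |d ya v| := by
    have h1 : ∀ b ∈ (Finset.univ : Finset ι), b ≠ a → (∑ yi, ∑ ui, w b yi ui) = 1 := by
      intro b _ hba
      by_cases hbj : b = j
      · subst hbj
        simp only [hwj]
        simp [Finset.sum_ite_eq', ← Finset.mul_sum]
      · simp only [hwi b hba hbj]
        have hsum1 : ∀ yi : Y b, ∑ ui, c b yi ui * (Fintype.card (Y b) : ℝ)⁻¹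
            = (Fintype.card (Y b) : ℝ)⁻¹ := by
          intro yi; rw [← Finset.sum_mul, (hc b yi).2, one_mul]
        simp only [hsum1]
        rw [Finset.sum_const, Finset.card_univ, nsmul_eq_mul, mul_inv_cancel₀]
        exact Nat.cast_ne_zero.2 Fintype.card_ne_zero
    rw [Finset.prod_eq_single_of_mem a (Finset.mem_univ a) h1]
    simp only [hwa]
    apply Finset.sum_congr rfl
    intro ya _
    rw [← Finset.sum_mul, mul_comm]
  calc |∑ y : ∀ i, Y i, ∑ u : ∀ i, U i,
      (if y j = yj ∧ u j = uj then
          (r y u - C y u) * ((d (y a) (u a) * (Fintype.card (Y a) : ℝ)⁻¹)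
            * ∏ i ∈ (Finset.univ.erase j).erase a, (c i (y i) (u i) * (Fintype.card (Y i) : ℝ)⁻¹))
        else 0)|
      ≤ ∑ y : ∀ i, Y i, ∑ u : ∀ i, U i, lamA / 2 * ∏ i, w i (y i) (u i) := by
        calc |∑ y : ∀ i, Y i, ∑ u : ∀ i, U i,
            (if y j = yj ∧ u j = uj then
                (r y u - C y u) * ((d (y a) (u a) * (Fintype.card (Y a) : ℝ)⁻¹)
                  * ∏ i ∈ (Finset.univ.erase j).erase a,
                      (c i (y i) (u i) * (Fintype.card (Y i) : ℝ)⁻¹))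
              else 0)|
            ≤ ∑ y : ∀ i, Y i, |∑ u : ∀ i, U i,
                (if y j = yj ∧ u j = uj then
                    (r y u - C y u) * ((d (y a) (u a) * (Fintype.card (Y a) : ℝ)⁻¹)
                      * ∏ i ∈ (Finset.univ.erase j).erase a,
                          (c i (y i) (u i) * (Fintype.card (Y i) : ℝ)⁻¹))
                  else 0)| := Finset.abs_sum_le_sum_abs _ _
          _ ≤ ∑ y : ∀ i, Y i, ∑ u : ∀ i, U i,
                |if y j = yj ∧ u j = uj then
                    (r y u - C y u) * ((d (y a) (u a) * (Fintype.card (Y a) : ℝ)⁻¹)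
                      * ∏ i ∈ (Finset.univ.erase j).erase a,
                          (c i (y i) (u i) * (Fintype.card (Y i) : ℝ)⁻¹))
                  else 0| :=
              Finset.sum_le_sum fun y _ => Finset.abs_sum_le_sum_abs _ _
          _ ≤ ∑ y : ∀ i, Y i, ∑ u : ∀ i, U i, lamA / 2 * ∏ i, w i (y i) (u i) :=
              Finset.sum_le_sum fun y _ => Finset.sum_le_sum fun u _ => hterm y u
    _ = lamA / 2 * ∑ y : ∀ i, Y i, ∑ u : ∀ i, U i, ∏ i, w i (y i) (u i) := by
        simp only [← Finset.mul_sum]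
    _ = lamA / 2 * ∑ ya : Y a, (Fintype.card (Y a) : ℝ)⁻¹ * ∑ v, |d ya v| := by
        rw [master_sum, hcols]

theorem stmt_14 {N : ℕ}
    {Y U : Fin N → Type*} [∀ i, Fintype (Y i)] [∀ i, Nonempty (Y i)]
    [∀ i, Fintype (U i)] [∀ i, Nonempty (U i)]
    [∀ i, DecidableEq (Y i)] [∀ i, DecidableEq (U i)]
    (r : (∀ i, Y i) → (∀ i, U i) → ℝ)
    (lam : Fin N → ℝ)
    (hlam : ∀ i, lam i =
      Finset.univ.sup' Finset.univ_nonempty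
        (fun p : (∀ k, Y k) × (∀ k, U k) =>
          Finset.univ.sup' Finset.univ_nonempty
              (fun v : U i => r p.1 (Function.update p.2 i v))
            - Finset.univ.inf' Finset.univ_nonempty
              (fun v : U i => r p.1 (Function.update p.2 i v))))
    (G : (j : Fin N) → (∀ i, Y i → U i → ℝ) → Y j → U j → ℝ)
    (hG : ∀ j γ yj uj, G j γ yj uj =
      ∑ y : ∀ i, Y i, ∑ u : ∀ i, U i,
        if y j = yj ∧ u j = uj then
          r y u * ∏ i ∈ Finset.univ.erase j,
            (γ i (y i) (u i) * (Fintype.card (Y i) : ℝ)⁻¹)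
        else 0)
    (Ω : (j : Fin N) → (U j → ℝ) → ℝ) (ρ : Fin N → ℝ) (hρ : ∀ j, 0 < ρ j)
    -- `Ω j` is `ρ j`-strongly convex on the simplex with respect to the ℓ¹-norm
    (hΩ : ∀ j (δ ξ : U j → ℝ),
      ((∀ v, 0 ≤ δ v) ∧ ∑ v, δ v = 1) → ((∀ v, 0 ≤ ξ v) ∧ ∑ v, ξ v = 1) →
      ∀ t : ℝ, 0 ≤ t → t ≤ 1 →
        Ω j (fun v => t * δ v + (1 - t) * ξ v) ≤
          t * Ω j δ + (1 - t) * Ω j ξ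
            - ρ j * (t * (1 - t) / 2) * (∑ v, |δ v - ξ v|) ^ 2)
    (B : (j : Fin N) → (∀ i, Y i → U i → ℝ) → Y j → U j → ℝ)
    -- `B j γ yj` lies in the simplex and maximizes `δ ↦ ⟨G_j, δ⟩ - Ω_j(δ)` over it
    (hB : ∀ j γ yj, ((∀ v, 0 ≤ B j γ yj v) ∧ ∑ v, B j γ yj v = 1) ∧
      ∀ δ : U j → ℝ, (∀ v, 0 ≤ δ v) → ∑ v, δ v = 1 →
        ∑ uj, G j γ yj uj * δ uj - Ω j δ ≤
          ∑ uj, G j γ yj uj * B j γ yj uj - Ω j (B j γ yj))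
    (γ ξ : ∀ i, Y i → U i → ℝ)
    (hγ : ∀ i yi, (∀ v, 0 ≤ γ i yi v) ∧ ∑ v, γ i yi v = 1)
    (hξ : ∀ i yi, (∀ v, 0 ≤ ξ i yi v) ∧ ∑ v, ξ i yi v = 1)
    (j : Fin N) :
    ∑ yj : Y j, (Fintype.card (Y j) : ℝ)⁻¹ * ∑ uj, |B j γ yj uj - B j ξ yj uj| ≤
      (1 / ρ j) * ∑ i ∈ Finset.univ.erase j, (lam i / 2) *
        ∑ yi : Y i, (Fintype.card (Y i) : ℝ)⁻¹ * ∑ v, |γ i yi v - ξ i yi v| := by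
  classical
  set hyb : Finset (Fin N) → ∀ i, Y i → U i → ℝ :=
    fun S i => if i ∈ S then γ i else ξ i with hhyb
  have hhybk : ∀ (S : Finset (Fin N)) i yi,
      (∀ v, 0 ≤ hyb S i yi v) ∧ ∑ v, hyb S i yi v = 1 := by
    intro S i yi
    by_cases h : i ∈ S <;> simp only [hhyb, h, if_true, if_false]
    · exact hγ i yi
    · exact hξ i yi
  have hlam_ub : ∀ (a : Fin N) (y : ∀ i, Y i) (u : ∀ i, U i),
      Finset.univ.sup' Finset.univ_nonempty (fun v : U a => r y (Function.update u a v))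
        - Finset.univ.inf' Finset.univ_nonempty (fun v : U a => r y (Function.update u a v))
        ≤ lam a := by
    intro a y u
    rw [hlam a]
    exact Finset.le_sup'
      (f := fun p : (∀ k, Y k) × (∀ k, U k) =>
        Finset.univ.sup' Finset.univ_nonempty (fun v : U a => r p.1 (Function.update p.2 a v))
          - Finset.univ.inf' Finset.univ_nonempty (fun v : U a => r p.1 (Function.update p.2 a v)))
      (Finset.mem_univ ((y, u) : (∀ k, Y k) × (∀ k, U k)))
  have hlam_nn : ∀ a : Fin N, 0 ≤ lam a := by
    intro a
    obtain ⟨y⟩ : Nonempty (∀ i, Y i) := inferInstance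
    obtain ⟨u⟩ : Nonempty (∀ i, U i) := inferInstance
    obtain ⟨v⟩ : Nonempty (U a) := inferInstance
    have h1 : Finset.univ.inf' Finset.univ_nonempty (fun v : U a => r y (Function.update u a v))
        ≤ Finset.univ.sup' Finset.univ_nonempty (fun v : U a => r y (Function.update u a v)) :=
      le_trans (Finset.inf'_le _ (Finset.mem_univ v))
        (Finset.le_sup' (f := fun v : U a => r y (Function.update u a v)) (Finset.mem_univ v))
    have h2 := hlam_ub a y u
    linarith
  have hGdiff : ∀ (yj : Y j) (uj : U j), |G j γ yj uj - G j ξ yj uj|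
      ≤ ∑ i ∈ Finset.univ.erase j, lam i / 2 *
          ∑ yi : Y i, (Fintype.card (Y i) : ℝ)⁻¹ * ∑ v, |γ i yi v - ξ i yi v| := by
    intro yj uj
    have claim : ∀ S : Finset (Fin N), S ⊆ Finset.univ.erase j →
        |G j (hyb S) yj uj - G j ξ yj uj| ≤ ∑ i ∈ S, lam i / 2 *
          ∑ yi : Y i, (Fintype.card (Y i) : ℝ)⁻¹ * ∑ v, |γ i yi v - ξ i yi v| := by
      intro S
      induction S using Finset.induction_on with
      | empty =>
        intro _
        have hemp : hyb ∅ = ξ := by funext i; simp [hhyb]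
        simp [hemp]
      | @insert a S ha ih =>
        intro hsub
        have haE : a ∈ Finset.univ.erase j := hsub (Finset.mem_insert_self a S)
        have haj : a ≠ j := (Finset.mem_erase.1 haE).1
        have hSE : S ⊆ Finset.univ.erase j := fun x hx => hsub (Finset.mem_insert_of_mem hx)
        have hstep : G j (hyb (insert a S)) yj uj - G j (hyb S) yj uj
            = ∑ y : ∀ i, Y i, ∑ u : ∀ i, U i,
              (if y j = yj ∧ u j = uj then
                r y u * (((γ a (y a) (u a) - ξ a (y a) (u a)) * (Fintype.card (Y a) : ℝ)⁻¹)
                  * ∏ i ∈ (Finset.univ.erase j).erase a,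
                      (hyb S i (y i) (u i) * (Fintype.card (Y i) : ℝ)⁻¹))
              else 0) := by
          rw [hG, hG, ← Finset.sum_sub_distrib]
          apply Finset.sum_congr rfl; intro y _
          rw [← Finset.sum_sub_distrib]
          apply Finset.sum_congr rfl; intro u _
          by_cases h : y j = yj ∧ u j = uj
          · rw [if_pos h, if_pos h, if_pos h]
            have hp1 : ∏ i ∈ Finset.univ.erase j,
                (hyb (insert a S) i (y i) (u i) * (Fintype.card (Y i) : ℝ)⁻¹)
                = (γ a (y a) (u a) * (Fintype.card (Y a) : ℝ)⁻¹)
                  * ∏ i ∈ (Finset.univ.erase j).erase a,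
                      (hyb S i (y i) (u i) * (Fintype.card (Y i) : ℝ)⁻¹) := by
              rw [← Finset.mul_prod_erase _ _ haE]
              congr 1
              · simp [hhyb]
              · apply Finset.prod_congr rfl; intro i hi
                have hia : i ≠ a := (Finset.mem_erase.1 hi).1
                simp [hhyb, Finset.mem_insert, hia]
            have hp2 : ∏ i ∈ Finset.univ.erase j,
                (hyb S i (y i) (u i) * (Fintype.card (Y i) : ℝ)⁻¹)
                = (ξ a (y a) (u a) * (Fintype.card (Y a) : ℝ)⁻¹)
                  * ∏ i ∈ (Finset.univ.erase j).erase a,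
                      (hyb S i (y i) (u i) * (Fintype.card (Y i) : ℝ)⁻¹) := by
              rw [← Finset.mul_prod_erase _ _ haE]
              congr 1
              simp [hhyb, ha]
            rw [hp1, hp2]; ring
          · rw [if_neg h, if_neg h, if_neg h, sub_zero]
        have hcb := coord_bound r j a haj yj uj (hyb S) (hhybk S)
          (fun ya v => γ a ya v - ξ a ya v)
          (fun ya => by rw [Finset.sum_sub_distrib, (hγ a ya).2, (hξ a ya).2, sub_self])
          (lam a) (hlam_ub a)
        have h5 : |G j (hyb (insert a S)) yj uj - G j (hyb S) yj uj|
            ≤ lam a / 2 * ∑ ya : Y a, (Fintype.card (Y a) : ℝ)⁻¹ * ∑ v, |γ a ya v - ξ a ya v| := by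
          rw [hstep]; exact hcb
        calc |G j (hyb (insert a S)) yj uj - G j ξ yj uj|
            ≤ |G j (hyb (insert a S)) yj uj - G j (hyb S) yj uj|
              + |G j (hyb S) yj uj - G j ξ yj uj| := abs_sub_le _ _ _
          _ ≤ (lam a / 2 * ∑ ya : Y a, (Fintype.card (Y a) : ℝ)⁻¹ * ∑ v, |γ a ya v - ξ a ya v|)
              + ∑ i ∈ S, lam i / 2 *
                  ∑ yi : Y i, (Fintype.card (Y i) : ℝ)⁻¹ * ∑ v, |γ i yi v - ξ i yi v| :=
              add_le_add h5 (ih hSE)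
          _ = ∑ i ∈ insert a S, lam i / 2 *
                  ∑ yi : Y i, (Fintype.card (Y i) : ℝ)⁻¹ * ∑ v, |γ i yi v - ξ i yi v| :=
              (Finset.sum_insert (f := fun i => lam i / 2 *
                ∑ yi : Y i, (Fintype.card (Y i) : ℝ)⁻¹ * ∑ v, |γ i yi v - ξ i yi v|) ha).symm
    have hγE : G j γ yj uj = G j (hyb (Finset.univ.erase j)) yj uj := by
      rw [hG, hG]
      apply Finset.sum_congr rfl; intro y _
      apply Finset.sum_congr rfl; intro u _
      by_cases h : y j = yj ∧ u j = uj
      · rw [if_pos h, if_pos h]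
        congr 1
        apply Finset.prod_congr rfl; intro i hi
        simp [hhyb, hi]
      · rw [if_neg h, if_neg h]
    rw [hγE]
    exact claim _ (Finset.Subset.refl _)
  have hMnn : 0 ≤ ∑ i ∈ Finset.univ.erase j, lam i / 2 *
      ∑ yi : Y i, (Fintype.card (Y i) : ℝ)⁻¹ * ∑ v, |γ i yi v - ξ i yi v| :=
    Finset.sum_nonneg fun i _ => mul_nonneg (by linarith [hlam_nn i])
      (Finset.sum_nonneg fun yi _ => mul_nonneg (by positivity)
        (Finset.sum_nonneg fun v _ => abs_nonneg _))
  have hyjb : ∀ yj : Y j, ∑ uj, |B j γ yj uj - B j ξ yj uj|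
      ≤ (∑ i ∈ Finset.univ.erase j, lam i / 2 *
          ∑ yi : Y i, (Fintype.card (Y i) : ℝ)⁻¹ * ∑ v, |γ i yi v - ξ i yi v|) / ρ j := by
    intro yj
    have hgap := argmax_gap (Ω j) (ρ j) (hρ j) (hΩ j) (G j γ yj) (G j ξ yj)
      (B j γ yj) (B j ξ yj) (hB j γ yj).1 (hB j ξ yj).1 (hB j γ yj).2 (hB j ξ yj).2
    have hub : ∑ v, (G j γ yj v - G j ξ yj v) * (B j γ yj v - B j ξ yj v)
        ≤ (∑ i ∈ Finset.univ.erase j, lam i / 2 *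
            ∑ yi : Y i, (Fintype.card (Y i) : ℝ)⁻¹ * ∑ v, |γ i yi v - ξ i yi v|)
          * ∑ uj, |B j γ yj uj - B j ξ yj uj| := by
      rw [Finset.mul_sum]
      apply Finset.sum_le_sum
      intro v _
      calc (G j γ yj v - G j ξ yj v) * (B j γ yj v - B j ξ yj v)
          ≤ |(G j γ yj v - G j ξ yj v) * (B j γ yj v - B j ξ yj v)| := le_abs_self _
        _ = |G j γ yj v - G j ξ yj v| * |B j γ yj v - B j ξ yj v| := abs_mul _ _
        _ ≤ (∑ i ∈ Finset.univ.erase j, lam i / 2 *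
              ∑ yi : Y i, (Fintype.card (Y i) : ℝ)⁻¹ * ∑ v, |γ i yi v - ξ i yi v|)
            * |B j γ yj v - B j ξ yj v| :=
            mul_le_mul_of_nonneg_right (hGdiff yj v) (abs_nonneg _)
    have hs0 : 0 ≤ ∑ uj, |B j γ yj uj - B j ξ yj uj| :=
      Finset.sum_nonneg fun v _ => abs_nonneg _
    rcases eq_or_lt_of_le hs0 with h | h
    · rw [← h]; exact div_nonneg hMnn (hρ j).le
    · rw [le_div_iff₀ (hρ j)]
      nlinarith [hgap, hub]
  have hcard : ((Fintype.card (Y j) : ℝ)) ≠ 0 := Nat.cast_ne_zero.2 Fintype.card_ne_zero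
  calc ∑ yj : Y j, (Fintype.card (Y j) : ℝ)⁻¹ * ∑ uj, |B j γ yj uj - B j ξ yj uj|
      ≤ ∑ yj : Y j, (Fintype.card (Y j) : ℝ)⁻¹
          * ((∑ i ∈ Finset.univ.erase j, lam i / 2 *
              ∑ yi : Y i, (Fintype.card (Y i) : ℝ)⁻¹ * ∑ v, |γ i yi v - ξ i yi v|) / ρ j) :=
        Finset.sum_le_sum fun yj _ => mul_le_mul_of_nonneg_left (hyjb yj) (by positivity)
    _ = (1 / ρ j) * ∑ i ∈ Finset.univ.erase j, lam i / 2 *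
          ∑ yi : Y i, (Fintype.card (Y i) : ℝ)⁻¹ * ∑ v, |γ i yi v - ξ i yi v| := by
        rw [Finset.sum_const, Finset.card_univ, nsmul_eq_mul, ← mul_assoc,
          mul_inv_cancel₀ hcard, one_mul, div_eq_mul_inv, one_div, mul_comm]
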